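/- Let A ≤ S_m and let C_n = ⟨(1,2,…,n)⟩ ≤ S_n be the cyclic group generated by an n-cycle. Then δ(A≀_P C_n) = 1 − (1/n) ∑_{d | n} φ(d) · (1−δ(A))^{n/d}, where φ denotes Euler's totient function. -/

import Mathlib

open Equiv Finset

/-- The number of fixed points of a permutation. -/
noncomputable def fixCnt {X : Type*} (g : Equiv.Perm X) : ℕ := {x | g x = x}.ncard

/-- The proportion of elements `a` of the set `C` such that the permutation `f a`
has exactly `k` fixed points. -/
noncomputable def propFixVia {α X : Type*} (f : α → Equiv.Perm X) (C : Set α) (k : ℕ) : ℝ :=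
  (({a ∈ C | fixCnt (f a) = k}).ncard : ℝ) / (C.ncard : ℝ)

/-- `δ_k(C)`: the proportion of elements of `C ⊆ Sym(X)` with exactly `k` fixed points. -/
noncomputable def propFix {X : Type*} (C : Set (Equiv.Perm X)) (k : ℕ) : ℝ :=
  propFixVia id C k

/-- The element `(α, b)` of the wreath product acting on `X × Y` via the imprimitive
action `(x, y) ↦ (x α(y), y b)`. -/
def imprimPerm {X Y : Type*} (α : Y → Equiv.Perm X) (b : Equiv.Perm Y) :
    Equiv.Perm (X × Y) where
  toFun p := (α p.2 p.1, b p.2)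
  invFun p := ((α (b⁻¹ p.2))⁻¹ p.1, b⁻¹ p.2)
  left_inv p := by simp
  right_inv p := by simp

/-- The element `(α, b)` of the wreath product acting on `X^Y` via the power action
`(ω(α,b))(y) = ω(y b⁻¹) α(y b⁻¹)`. -/
def powerPerm {X Y : Type*} (α : Y → Equiv.Perm X) (b : Equiv.Perm Y) :
    Equiv.Perm (Y → X) where
  toFun ω y := α (b⁻¹ y) (ω (b⁻¹ y))
  invFun ω y := (α y)⁻¹ (ω (b y))
  left_inv ω := by funext y; simp
  right_inv ω := by funext y; simp

/-- The number of cycles of a permutation in its disjoint cycle decomposition,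
where fixed points are counted as 1-cycles. -/
noncomputable def cycleCnt {Y : Type*} [Fintype Y] [DecidableEq Y] (b : Equiv.Perm Y) : ℕ :=
  b.cycleType.card + fixCnt b

/-- The underlying set of the wreath product `A ≀ B` (pairs `(α, b)`). -/
def wreathSet {m n : ℕ} (A : Subgroup (Equiv.Perm (Fin m))) (B : Subgroup (Equiv.Perm (Fin n))) :
    Set ((Fin n → Equiv.Perm (Fin m)) × Equiv.Perm (Fin n)) :=
  {p | (∀ y, p.1 y ∈ A) ∧ p.2 ∈ B}

/-- `δ_k(A ≀_I B)` for the imprimitive action on `[m] × [n]`. -/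
noncomputable def deltaI {m n : ℕ} (A : Subgroup (Equiv.Perm (Fin m)))
    (B : Subgroup (Equiv.Perm (Fin n))) (k : ℕ) : ℝ :=
  propFixVia (fun p => imprimPerm p.1 p.2) (wreathSet A B) k

/-- `δ_k(A ≀_P B)` for the power action on `[m]^[n]`. -/
noncomputable def deltaP {m n : ℕ} (A : Subgroup (Equiv.Perm (Fin m)))
    (B : Subgroup (Equiv.Perm (Fin n))) (k : ℕ) : ℝ :=
  propFixVia (fun p => powerPerm p.1 p.2) (wreathSet A B) k

/-- `[B, ℓ]`: the number of elements of `B` with exactly `ℓ` cycles. -/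
noncomputable def stirCnt {n : ℕ} (B : Subgroup (Equiv.Perm (Fin n))) (ℓ : ℕ) : ℕ :=
  {b ∈ (B : Set (Equiv.Perm (Fin n))) | cycleCnt b = ℓ}.ncard

/-- A subgroup `A ≤ Sym(X)` is primitive if it is transitive and every block is trivial
(equivalently, it preserves no nontrivial partition of `X`). -/
def IsPrimitiveSubgroup {X : Type*} (A : Subgroup (Equiv.Perm X)) : Prop :=
  MulAction.IsPretransitive A X ∧
  ∀ s : Set X, MulAction.IsBlock A s → s.Subsingleton ∨ s = Set.univ




lemma card_gcd_fiber {n e : ℕ} (hn : 0 < n) (he : e ∈ n.divisors) :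
    #{j ∈ range n | Nat.gcd n j = e} = Nat.totient (n / e) := by
  have hed : e ∣ n := (Nat.mem_divisors.mp he).1
  have hepos : 0 < e := Nat.pos_of_mem_divisors he
  rw [Nat.totient_eq_card_coprime]
  refine (Finset.card_nbij (fun k => e * k) ?_ ?_ ?_).symm
  · intro k hk
    simp only [coe_filter, mem_filter, mem_range, Set.mem_setOf_eq] at hk ⊢
    obtain ⟨hk1, hk2⟩ := hk
    constructor
    · calc e * k < e * (n / e) := (Nat.mul_lt_mul_left hepos).mpr hk1
        _ = n := Nat.mul_div_cancel' hed
    · conv_lhs => rw [← Nat.mul_div_cancel' hed]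
      rw [Nat.gcd_mul_left, Nat.Coprime.gcd_eq_one hk2, mul_one]
  · intro a _ b _ hab
    exact Nat.eq_of_mul_eq_mul_left hepos hab
  · intro j hj
    simp only [coe_filter, mem_range, Set.mem_setOf_eq, Set.mem_image] at hj ⊢
    obtain ⟨hj1, hj2⟩ := hj
    have hej : e ∣ j := hj2 ▸ Nat.gcd_dvd_right n j
    refine ⟨j / e, ⟨?_, ?_⟩, Nat.mul_div_cancel' hej⟩
    · exact Nat.div_lt_div_of_lt_of_dvd hed hj1
    · have : e * Nat.gcd (n / e) (j / e) = e := by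
        rw [← Nat.gcd_mul_left, Nat.mul_div_cancel' hed, Nat.mul_div_cancel' hej, hj2]
      have := Nat.eq_of_mul_eq_mul_left hepos (this.trans (mul_one e).symm)
      exact this
  
lemma sum_pow_gcd (n : ℕ) (hn : 1 ≤ n) (t : ℝ) :
    ∑ j ∈ range n, t ^ Nat.gcd n j =
      ∑ d ∈ n.divisors, (Nat.totient d : ℝ) * t ^ (n / d) := by
  have h0 : n ≠ 0 := by omega
  have hmaps : ∀ j ∈ range n, Nat.gcd n j ∈ n.divisors :=
    fun j _ => Nat.mem_divisors.mpr ⟨Nat.gcd_dvd_left n j, h0⟩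
  rw [← Finset.sum_fiberwise_of_maps_to hmaps (fun j => t ^ Nat.gcd n j)]
  rw [← Nat.sum_div_divisors n (fun d => (Nat.totient d : ℝ) * t ^ (n / d))]
  refine Finset.sum_congr rfl fun e he => ?_
  have hed : e ∣ n := (Nat.mem_divisors.mp he).1
  rw [Nat.div_div_self hed h0]
  have : ∀ j ∈ {j ∈ range n | Nat.gcd n j = e}, t ^ Nat.gcd n j = t ^ e := by
    intro j hj
    rw [(mem_filter.mp hj).2]
  rw [Finset.sum_congr rfl this, Finset.sum_const, card_gcd_fiber (by omega) he,
    nsmul_eq_mul]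

variable {G : Type*} [Group G]

/-- ordered partial product `v (t-1) * ⋯ * v 0`. -/
def natProd (v : ℕ → G) : ℕ → G
  | 0 => 1
  | (t + 1) => v t * natProd v t

lemma natProd_congr {v w : ℕ → G} {s : ℕ} (h : ∀ t < s, v t = w t) :
    natProd v s = natProd w s := by
  induction s with
  | zero => rfl
  | succ s ih =>
    rw [natProd, natProd, h s (Nat.lt_succ_self s), ih (fun t ht => h t (by omega))]

lemma natProd_mem {A : Subgroup G} {v : ℕ → G} {s : ℕ} (h : ∀ t < s, v t ∈ A) :
    natProd v s ∈ A := by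
  induction s with
  | zero => exact A.one_mem
  | succ s ih =>
    exact A.mul_mem (h s (Nat.lt_succ_self s)) (ih (fun t ht => h t (by omega)))

/-- extend a `Fin s`-tuple to `ℕ` by `1`. -/
def vOf {s : ℕ} (w : Fin s → G) : ℕ → G := fun t => if h : t < s then w ⟨t, h⟩ else 1

/-- ordered product of a tuple. -/
def finProd {s : ℕ} (w : Fin s → G) : G := natProd (vOf w) s

lemma finProd_mem {A : Subgroup G} {s : ℕ} {w : Fin s → G} (h : ∀ k, w k ∈ A) :
    finProd w ∈ A := natProd_mem (fun t ht => by simp [vOf, ht, h])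

lemma finProd_snoc {s : ℕ} (u : Fin s → G) (x : G) :
    finProd (Fin.snoc u x) = x * finProd u := by
  unfold finProd
  rw [natProd]
  congr 1
  · simp [vOf, Fin.snoc_last, Fin.snoc]
  · refine natProd_congr fun t ht => ?_
    simp only [vOf, dif_pos ht, dif_pos (Nat.lt_succ_of_lt ht)]
    rw [show (⟨t, Nat.lt_succ_of_lt ht⟩ : Fin (s+1)) = Fin.castSucc ⟨t, ht⟩ from rfl,
      Fin.snoc_castSucc]

/-- cyclic successor in `Fin ℓ`. -/
def finSucc {ℓ : ℕ} (k : Fin ℓ) : Fin ℓ := ⟨(k.val + 1) % ℓ, Nat.mod_lt _ k.pos⟩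

section E

variable (n j : ℕ)

/-- the orbit-parametrizing map. -/
def Emap (hn : 0 < n) : Fin (Nat.gcd n j) × Fin (n / Nat.gcd n j) → Fin n :=
  fun p => ⟨(p.1.val + p.2.val * j) % n, Nat.mod_lt _ hn⟩

lemma Emap_bij (hn : 0 < n) : Function.Bijective (Emap n j hn) := by
  have hg : 0 < Nat.gcd n j := Nat.gcd_pos_of_pos_left j hn
  have hgn : Nat.gcd n j ∣ n := Nat.gcd_dvd_left n j
  have hgj : Nat.gcd n j ∣ j := Nat.gcd_dvd_right n j
  have hinj : Function.Injective (Emap n j hn) := by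
    rintro ⟨r, k⟩ ⟨r', k'⟩ h
    have h' : (r.val + k.val * j) ≡ (r'.val + k'.val * j) [MOD n] := by
      simpa [Emap, Nat.ModEq] using congrArg Fin.val h
    have hgmod : (r.val + k.val * j) ≡ (r'.val + k'.val * j) [MOD Nat.gcd n j] :=
      h'.of_dvd hgn
    have hr0 : r.val ≡ r.val + k.val * j [MOD Nat.gcd n j] := by
      conv_lhs => rw [← Nat.add_zero r.val]
      exact Nat.ModEq.add_left _ ((Nat.modEq_zero_iff_dvd).mpr (Dvd.dvd.mul_left hgj _)).symm
    have hr0' : r'.val ≡ r'.val + k'.val * j [MOD Nat.gcd n j] := by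
      conv_lhs => rw [← Nat.add_zero r'.val]
      exact Nat.ModEq.add_left _ ((Nat.modEq_zero_iff_dvd).mpr (Dvd.dvd.mul_left hgj _)).symm
    have hrr : r.val = r'.val := by
      have := (hr0.trans hgmod).trans hr0'.symm
      simpa [Nat.ModEq, Nat.mod_eq_of_lt r.isLt, Nat.mod_eq_of_lt r'.isLt] using this
    have hkk : k.val * j ≡ k'.val * j [MOD n] := by
      refine Nat.ModEq.add_left_cancel' r.val ?_
      rw [hrr] at h' ⊢; exact h'
    have hk : k.val ≡ k'.val [MOD n / Nat.gcd n j] := hkk.cancel_right_div_gcd hn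
    have : k.val = k'.val := by
      simpa [Nat.ModEq, Nat.mod_eq_of_lt k.isLt, Nat.mod_eq_of_lt k'.isLt] using hk
    exact Prod.ext (Fin.ext hrr) (Fin.ext this)
  refine (Fintype.bijective_iff_injective_and_card _).mpr ⟨hinj, ?_⟩
  simp [Nat.mul_div_cancel' hgn]

/-- the orbit parametrization as an equiv. -/
noncomputable def EE (hn : 0 < n) : Fin (Nat.gcd n j) × Fin (n / Nat.gcd n j) ≃ Fin n :=
  Equiv.ofBijective _ (Emap_bij n j hn)

lemma EE_val (hn : 0 < n) (r : Fin (Nat.gcd n j)) (k : Fin (n / Nat.gcd n j)) :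
    (EE n j hn (r, k)).val = (r.val + k.val * j) % n := rfl

lemma rot_pow_val (hn : 0 < n) (s : ℕ) (y : Fin n) :
    (((finRotate n) ^ s) y).val = (y.val + s) % n := by
  obtain ⟨n', rfl⟩ : ∃ n', n = n' + 1 := ⟨n - 1, by omega⟩
  induction s with
  | zero => simp [Nat.mod_eq_of_lt y.isLt]
  | succ s ih =>
    rw [pow_succ', Equiv.Perm.mul_apply, finRotate_succ_apply, Fin.add_def, ih, Fin.val_one']
    conv_rhs => rw [← Nat.add_assoc]
    rw [Nat.add_mod ((y:ℕ) + s) 1]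

lemma rot_EE (hn : 0 < n) (r : Fin (Nat.gcd n j)) (k : Fin (n / Nat.gcd n j)) :
    ((finRotate n) ^ j) (EE n j hn (r, k)) = EE n j hn (r, finSucc k) := by
  have hgn : Nat.gcd n j ∣ n := Nat.gcd_dvd_left n j
  have hgj : Nat.gcd n j ∣ j := Nat.gcd_dvd_right n j
  have hnlj : n ∣ (n / Nat.gcd n j) * j := by
    set d := Nat.gcd n j with hd
    obtain ⟨j', hj'⟩ := hgj
    refine ⟨j', ?_⟩
    rw [hj', ← Nat.mul_assoc, Nat.div_mul_cancel hgn]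
  apply Fin.ext
  rw [rot_pow_val n hn j, EE_val, EE_val, Nat.mod_add_mod]
  show _ = (r.val + ((k.val + 1) % (n / Nat.gcd n j)) * j) % n
  have : (k.val + 1) * j ≡ ((k.val + 1) % (n / Nat.gcd n j)) * j [MOD n] :=
    Nat.ModEq.of_dvd hnlj (Nat.ModEq.mul_right' j (Nat.mod_modEq (k.val + 1) _).symm)
  calc (r.val + k.val * j + j) % n = (r.val + (k.val + 1) * j) % n := by ring_nf
    _ = (r.val + ((k.val + 1) % (n / Nat.gcd n j)) * j) % n := Nat.ModEq.add_left _ this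

end E
-- dynamics
section Dyn

lemma powerPerm_fixed_iff {X Y : Type*} (α : Y → Equiv.Perm X) (b : Equiv.Perm Y)
    (ω : Y → X) : powerPerm α b ω = ω ↔ ∀ y, ω (b y) = α y (ω y) := by
  constructor
  · intro h y
    have := congrFun h (b y)
    simpa [powerPerm] using this.symm
  · intro h
    funext y
    have := (h (b⁻¹ y)).symm
    rw [Equiv.Perm.coe_inv, Equiv.apply_symm_apply] at this
    simpa [powerPerm] using this

variable {m : ℕ} (n j : ℕ) (hn : 0 < n) (α : Fin n → Equiv.Perm (Fin m))

/-- tuple of `α`-values along the `r`-th cycle of `finRotate n ^ j`. -/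
noncomputable def wcyc (r : Fin (Nat.gcd n j)) : Fin (n / Nat.gcd n j) → Equiv.Perm (Fin m) :=
  fun k => α (EE n j hn (r, k))

lemma exists_fixed_iff :
    (∃ ω, powerPerm α ((finRotate n) ^ j) ω = ω) ↔
      ∀ r, ∃ x, finProd (wcyc n j hn α r) x = x := by
  have hl : 0 < n / Nat.gcd n j :=
    Nat.div_pos (Nat.le_of_dvd hn (Nat.gcd_dvd_left n j)) (Nat.gcd_pos_of_pos_left j hn)
  constructor
  · rintro ⟨ω, hω⟩ r
    rw [powerPerm_fixed_iff] at hω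
    set w := wcyc n j hn α r with hw
    set x := ω (EE n j hn (r, ⟨0, hl⟩)) with hx
    have key : ∀ t, t ≤ n / Nat.gcd n j →
        ω (EE n j hn (r, ⟨t % (n / Nat.gcd n j), Nat.mod_lt _ hl⟩)) =
          natProd (vOf w) t x := by
      intro t
      induction t with
      | zero => intro _; simp [hx, Nat.mod_eq_of_lt hl, natProd]
      | succ t ih =>
        intro ht
        have htl : t < n / Nat.gcd n j := by omega
        have h1 : (⟨(t+1) % (n / Nat.gcd n j), Nat.mod_lt _ hl⟩ : Fin (n / Nat.gcd n j)) =
            finSucc ⟨t % (n / Nat.gcd n j), Nat.mod_lt _ hl⟩ := by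
          simp [finSucc, Nat.mod_add_mod]
        rw [h1, ← rot_EE n j hn, hω, natProd]
        rw [ih (by omega)]
        congr 1
        simp [vOf, htl, hw, wcyc, Nat.mod_eq_of_lt htl]
    have hthis := key (n / Nat.gcd n j) le_rfl
    have e0 : (⟨n / Nat.gcd n j % (n / Nat.gcd n j), Nat.mod_lt _ hl⟩ :
        Fin (n / Nat.gcd n j)) = ⟨0, hl⟩ := Fin.ext (Nat.mod_self _)
    rw [e0] at hthis
    exact ⟨x, by rw [finProd, ← hthis]⟩
  · intro h
    choose x hx using h
    refine ⟨fun y => natProd (vOf (wcyc n j hn α (((EE n j hn).symm y).1)))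
      (((EE n j hn).symm y).2).val (x ((EE n j hn).symm y).1), ?_⟩
    rw [powerPerm_fixed_iff]
    intro y
    obtain ⟨⟨r, k⟩, rfl⟩ : ∃ p, EE n j hn p = y := ⟨(EE n j hn).symm y, by simp⟩
    rw [rot_EE n j hn, Equiv.symm_apply_apply, Equiv.symm_apply_apply]
    have hrhs : α (EE n j hn (r, k)) (natProd (vOf (wcyc n j hn α r)) k.val (x r)) =
        natProd (vOf (wcyc n j hn α r)) (k.val + 1) (x r) := by
      rw [natProd]
      congr 1
      simp [vOf, k.isLt, wcyc]
    rw [hrhs]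
    rcases Nat.lt_or_ge (k.val + 1) (n / Nat.gcd n j) with hlt | hge
    · congr 1
      simp [finSucc, Nat.mod_eq_of_lt hlt]
    · have heq : k.val + 1 = n / Nat.gcd n j := by omega
      have h0 : (finSucc k).val = 0 := by simp [finSucc, heq]
      have hfs : (finSucc k) = ⟨0, hl⟩ := Fin.ext h0
      have h2 : (natProd (vOf (wcyc n j hn α r)) (k.val + 1)) (x r) = x r := by
        rw [heq]
        exact hx r
      rw [hfs, h2]
      simp [natProd]
  
end Dyn
section Counting

lemma nat_card_sigma {ι : Type*} [Fintype ι] (f : ι → Type*) [∀ i, Finite (f i)] :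
    Nat.card (Σ i, f i) = ∑ i, Nat.card (f i) := by
  letI : ∀ i, Fintype (f i) := fun i => Fintype.ofFinite _
  simp [Nat.card_eq_fintype_card]

variable {G : Type*} [Group G]

/-- splitting off the product of a tuple. -/
def tupleEquiv (s : ℕ) : (Fin (s + 1) → G) ≃ G × (Fin s → G) where
  toFun w := (finProd w, Fin.init w)
  invFun pu := Fin.snoc pu.2 (pu.1 * (finProd pu.2)⁻¹)
  left_inv w := by
    have h : finProd w = w (Fin.last s) * finProd (Fin.init w) := by
      conv_lhs => rw [← Fin.snoc_init_self w]
      rw [finProd_snoc]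
    show Fin.snoc (Fin.init w) (finProd w * (finProd (Fin.init w))⁻¹) = w
    rw [h, mul_inv_cancel_right]
    exact Fin.snoc_init_self w
  right_inv pu := by
    obtain ⟨p, u⟩ := pu
    simp [finProd_snoc, Fin.init_snoc]

lemma card_cycle [Finite G] (A : Subgroup G) (Q : G → Prop) (ℓ : ℕ) (hl : 0 < ℓ) :
    Nat.card {w : Fin ℓ → G // (∀ k, w k ∈ A) ∧ Q (finProd w)} =
      Nat.card {p : G // p ∈ A ∧ Q p} * Nat.card A ^ (ℓ - 1) := by
  obtain ⟨s, rfl⟩ : ∃ s, ℓ = s + 1 := ⟨ℓ - 1, by omega⟩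
  have hiff : ∀ w : Fin (s + 1) → G,
      ((∀ k, w k ∈ A) ∧ Q (finProd w)) ↔
        ((fun pu : G × (Fin s → G) => (pu.1 ∈ A ∧ Q pu.1) ∧ ∀ k, pu.2 k ∈ A)
          (tupleEquiv s w)) := by
    intro w
    have h : finProd w = w (Fin.last s) * finProd (Fin.init w) := by
      conv_lhs => rw [← Fin.snoc_init_self w]
      rw [finProd_snoc]
    constructor
    · rintro ⟨h1, h2⟩
      exact ⟨⟨finProd_mem h1, h2⟩, fun k => h1 _⟩
    · rintro ⟨⟨hpA, hpQ⟩, hu⟩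
      refine ⟨fun k => ?_, hpQ⟩
      induction k using Fin.lastCases with
      | last =>
        have hwl : w (Fin.last s) = finProd w * (finProd (Fin.init w))⁻¹ := by
          rw [h, mul_inv_cancel_right]
        rw [hwl]
        exact A.mul_mem hpA (A.inv_mem (finProd_mem hu))
      | cast i => exact hu i
  rw [Nat.card_congr (Equiv.subtypeEquiv (q := fun pu : G × (Fin s → G) =>
    (pu.1 ∈ A ∧ Q pu.1) ∧ ∀ k, pu.2 k ∈ A) (tupleEquiv s) hiff)]
  rw [Nat.card_congr (Equiv.subtypeProdEquivProd (p := fun p : G => p ∈ A ∧ Q p)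
    (q := fun u : Fin s → G => ∀ k, u k ∈ A)), Nat.card_prod, Nat.card_congr
    (Equiv.subtypePiEquivPi (p := fun (_ : Fin s) (x : G) => x ∈ A)), Nat.card_pi]
  simp [Nat.add_sub_cancel]

variable {m : ℕ} (n j : ℕ) (hn : 0 < n) (A : Subgroup (Equiv.Perm (Fin m)))

lemma card_nonder :
    Nat.card {α : Fin n → Equiv.Perm (Fin m) // (∀ y, α y ∈ A) ∧
        ∀ r, ∃ x, finProd (wcyc n j hn α r) x = x} =
      Nat.card {p : Equiv.Perm (Fin m) // p ∈ A ∧ ∃ x, p x = x} ^ Nat.gcd n j *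
        Nat.card A ^ (n - Nat.gcd n j) := by
  have hgn : Nat.gcd n j ∣ n := Nat.gcd_dvd_left n j
  have hl : 0 < n / Nat.gcd n j :=
    Nat.div_pos (Nat.le_of_dvd hn hgn) (Nat.gcd_pos_of_pos_left j hn)
  have e : {α : Fin n → Equiv.Perm (Fin m) // (∀ y, α y ∈ A) ∧
        ∀ r, ∃ x, finProd (wcyc n j hn α r) x = x} ≃
      ∀ _r : Fin (Nat.gcd n j), {w : Fin (n / Nat.gcd n j) → Equiv.Perm (Fin m) //
        (∀ k, w k ∈ A) ∧ ∃ x, finProd w x = x} := by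
    refine ⟨fun a r => ⟨wcyc n j hn a.1 r, fun k => a.2.1 _, a.2.2 r⟩,
      fun F => ⟨fun y => (F ((EE n j hn).symm y).1).1 ((EE n j hn).symm y).2, ?_, ?_⟩,
      ?_, ?_⟩
    · exact fun y => (F _).2.1 _
    · intro r
      have hw : wcyc n j hn
          (fun y => (F ((EE n j hn).symm y).1).1 ((EE n j hn).symm y).2) r = (F r).1 := by
        funext k
        simp [wcyc, Equiv.symm_apply_apply]
      rw [hw]
      exact (F r).2.2
    · intro a
      refine Subtype.ext (funext fun y => ?_)
      simp [wcyc, Equiv.apply_symm_apply]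
    · intro F
      refine funext fun r => Subtype.ext (funext fun k => ?_)
      simp [wcyc, Equiv.symm_apply_apply]
  rw [Nat.card_congr e, Nat.card_pi, Finset.prod_const, Finset.card_univ, Fintype.card_fin,
    card_cycle A (fun p => ∃ x, p x = x) _ hl, mul_pow, ← pow_mul]
  congr 2
  rw [Nat.sub_mul, one_mul, Nat.div_mul_cancel hgn]

end Counting

section Assembly

lemma orderOf_finRotate' (n : ℕ) (hn : 0 < n) : orderOf (finRotate n) = n := by
  rw [orderOf_eq_iff hn]
  constructor
  · refine Equiv.ext fun y => Fin.ext ?_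
    rw [rot_pow_val n hn n y]
    simp [Nat.add_mod_right, Nat.mod_eq_of_lt y.isLt]
  · intro s hs hs0 hcon
    have := congrArg (fun e : Equiv.Perm (Fin n) => (e ⟨0, hn⟩).val) hcon
    simp only [rot_pow_val n hn s] at this
    rw [Nat.zero_add, Nat.mod_eq_of_lt hs] at this
    simp at this
    omega

lemma fixCnt_eq_zero_iff {X : Type*} [Fintype X] (g : Equiv.Perm X) :
    fixCnt g = 0 ↔ ∀ x, g x ≠ x := by
  rw [fixCnt, Set.ncard_eq_zero (Set.toFinite _), Set.eq_empty_iff_forall_notMem]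
  simp

lemma card_wreath (m n : ℕ) (hn : 0 < n) (A : Subgroup (Equiv.Perm (Fin m))) :
    Nat.card (wreathSet A (Subgroup.zpowers (finRotate n))) = Nat.card A ^ n * n := by
  have e : ↥(wreathSet A (Subgroup.zpowers (finRotate n))) ≃
      {α : Fin n → Equiv.Perm (Fin m) // ∀ y, α y ∈ A} ×
        {b : Equiv.Perm (Fin n) // b ∈ Subgroup.zpowers (finRotate n)} :=
    Equiv.subtypeProdEquivProd (p := fun α : Fin n → Equiv.Perm (Fin m) => ∀ y, α y ∈ A)
      (q := fun b => b ∈ Subgroup.zpowers (finRotate n))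
  rw [Nat.card_congr e, Nat.card_prod, Nat.card_congr
    (Equiv.subtypePiEquivPi (p := fun (_ : Fin n) x => x ∈ A)), Nat.card_pi]
  have h2 : Nat.card {b : Equiv.Perm (Fin n) // b ∈ Subgroup.zpowers (finRotate n)} = n := by
    exact (Nat.card_zpowers _).trans (orderOf_finRotate' n hn)
  rw [h2]
  simp

lemma card_nonder_total (m n : ℕ) (hn : 0 < n) (A : Subgroup (Equiv.Perm (Fin m))) :
    Nat.card {p : (Fin n → Equiv.Perm (Fin m)) × Equiv.Perm (Fin n) //
        p ∈ wreathSet A (Subgroup.zpowers (finRotate n)) ∧ ∃ ω, powerPerm p.1 p.2 ω = ω} =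
      ∑ i : Fin n, Nat.card {p : Equiv.Perm (Fin m) // p ∈ A ∧ ∃ x, p x = x} ^
          Nat.gcd n i.val * Nat.card A ^ (n - Nat.gcd n i.val) := by
  have e : {p : (Fin n → Equiv.Perm (Fin m)) × Equiv.Perm (Fin n) //
        p ∈ wreathSet A (Subgroup.zpowers (finRotate n)) ∧ ∃ ω, powerPerm p.1 p.2 ω = ω} ≃
      Σ b : {b : Equiv.Perm (Fin n) // b ∈ Subgroup.zpowers (finRotate n)},
        {α : Fin n → Equiv.Perm (Fin m) //
          (∀ y, α y ∈ A) ∧ ∃ ω, powerPerm α b.1 ω = ω} :=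
    ⟨fun p => ⟨⟨p.1.2, p.2.1.2⟩, ⟨p.1.1, p.2.1.1, p.2.2⟩⟩,
     fun q => ⟨(q.2.1, q.1.1), ⟨q.2.2.1, q.1.2⟩, q.2.2.2⟩,
     fun p => rfl, fun q => rfl⟩
  rw [Nat.card_congr e, nat_card_sigma]
  have horder := orderOf_finRotate' n hn
  set eB : Fin n ≃ {b : Equiv.Perm (Fin n) // b ∈ Subgroup.zpowers (finRotate n)} :=
    (finCongr horder.symm).trans (finEquivZPowers (isOfFinOrder_of_finite _)) with heBdef
  have heB : ∀ i : Fin n, (eB i).1 = (finRotate n) ^ i.val := by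
    intro i
    rfl
  rw [← Equiv.sum_comp eB
    (fun b => Nat.card {α : Fin n → Equiv.Perm (Fin m) //
      (∀ y, α y ∈ A) ∧ ∃ ω, powerPerm α b.1 ω = ω})]
  refine Finset.sum_congr rfl fun i _ => ?_
  rw [Nat.card_congr (Equiv.subtypeEquivRight (fun α => by rw [heB i]))]
  rw [Nat.card_congr (Equiv.subtypeEquivRight
    (fun α => and_congr_right fun _ => exists_fixed_iff n i.val hn α))]
  exact card_nonder n i.val hn A

end Assembly
section Final

lemma ncard_sep_add_sep_not {β : Type*} [Fintype β] (C : Set β) (P : β → Prop) :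
    {x ∈ C | P x}.ncard + {x ∈ C | ¬ P x}.ncard = C.ncard := by
  classical
  have hu : {x ∈ C | P x} ∪ {x ∈ C | ¬ P x} = C := by
    ext x; by_cases h : P x <;> simp [h]
  have hd : Disjoint {x ∈ C | P x} {x ∈ C | ¬ P x} := by
    rw [Set.disjoint_left]
    rintro x ⟨_, hp⟩ ⟨_, hnp⟩
    exact hnp hp
  rw [← Set.ncard_union_eq hd (Set.toFinite _) (Set.toFinite _), hu]

lemma pow_div_helper (F a : ℝ) (ha : 0 < a) {g n : ℕ} (hg : g ≤ n) :
    F ^ g * a ^ (n - g) / a ^ n = (F / a) ^ g := by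
  have h : a ^ n = a ^ (n - g) * a ^ g := by
    rw [← pow_add]
    congr 1
    omega
  rw [h, div_pow, mul_comm (F ^ g), mul_div_mul_left _ _ (pow_ne_zero _ ha.ne')]

/-- **Corollary (power action over a cyclic group generated by an `n`-cycle).**
For `A ≤ S_m` and `C_n = ⟨(1,2,…,n)⟩ ≤ S_n`,
`δ(A ≀_P C_n) = 1 - (1/n) ∑_{d ∣ n} φ(d) (1 - δ(A))^{n/d}`. -/
theorem delta_power_wreath_cyclic (m n : ℕ) (hn : 1 ≤ n)
    (A : Subgroup (Equiv.Perm (Fin m))) :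
    deltaP A (Subgroup.zpowers (finRotate n)) 0 =
      1 - (1 / (n : ℝ)) *
        ∑ d ∈ Nat.divisors n,
          (Nat.totient d : ℝ) *
            (1 - propFix (A : Set (Equiv.Perm (Fin m))) 0) ^ (n / d) := by
  have hn0 : 0 < n := hn
  set G := Equiv.Perm (Fin m)
  set a := Nat.card A with ha
  set F := Nat.card {p : G // p ∈ A ∧ ∃ x, p x = x} with hF
  have hA1 : 0 < a := @Nat.card_pos _ ⟨(⟨1, A.one_mem⟩ : A)⟩ _
  have haR : (0 : ℝ) < (a : ℝ) := by exact_mod_cast hA1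
  have hnR : (0 : ℝ) < (n : ℝ) := by exact_mod_cast hn0
  -- the proportion δ(A)
  have hcardA : ((A : Set G)).ncard = a := by
    rw [← Nat.card_coe_set_eq]; rfl
  have hNA : {p ∈ (A : Set G) | ¬ fixCnt p = 0}.ncard = F := by
    rw [← Nat.card_coe_set_eq]
    refine Nat.card_congr (Equiv.subtypeEquivRight fun p => ?_)
    rw [Set.mem_sep_iff]
    refine and_congr_right fun _ => ?_
    rw [fixCnt_eq_zero_iff]
    push_neg
    rfl
  have hsplitA := ncard_sep_add_sep_not (A : Set G) (fun p => fixCnt p = 0)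
  rw [hNA, hcardA] at hsplitA
  have hdelta : 1 - propFix (A : Set G) 0 = (F : ℝ) / (a : ℝ) := by
    rw [propFix, propFixVia]
    have hid : {p ∈ (A : Set G) | fixCnt (id p) = 0} = {p ∈ (A : Set G) | fixCnt p = 0} := rfl
    rw [hid, hcardA]
    have : ({p ∈ (A : Set G) | fixCnt p = 0}.ncard : ℝ) = (a : ℝ) - (F : ℝ) := by
      have := hsplitA
      push_cast [← this]
      ring
    rw [this]
    field_simp
    ring
  -- the wreath product cardinalities
  set B := Subgroup.zpowers (finRotate n) with hB
  have hW : (wreathSet A B).ncard = a ^ n * n := by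
    rw [← Nat.card_coe_set_eq, card_wreath m n hn0 A]
  have hNw : {p ∈ wreathSet A B | ¬ fixCnt (powerPerm p.1 p.2) = 0}.ncard =
      ∑ i : Fin n, F ^ Nat.gcd n i.val * a ^ (n - Nat.gcd n i.val) := by
    rw [← Nat.card_coe_set_eq]
    rw [Nat.card_congr (Equiv.subtypeEquivRight (fun p => ?_))]
    · exact card_nonder_total m n hn0 A
    · rw [Set.mem_sep_iff]
      refine and_congr_right fun _ => ?_
      rw [fixCnt_eq_zero_iff]
      push_neg
      rfl
  have hsplitW := ncard_sep_add_sep_not (wreathSet A B)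
    (fun p => fixCnt (powerPerm p.1 p.2) = 0)
  rw [hNw, hW] at hsplitW
  -- final real computation
  rw [deltaP, propFixVia, hW, hdelta]
  have hD : ({p ∈ wreathSet A B | fixCnt (powerPerm p.1 p.2) = 0}.ncard : ℝ) =
      (a : ℝ) ^ n * n - ∑ i : Fin n, (F : ℝ) ^ Nat.gcd n i.val *
        (a : ℝ) ^ (n - Nat.gcd n i.val) := by
    have hc := congrArg (Nat.cast (R := ℝ)) hsplitW
    push_cast at hc
    linarith
  rw [hD]
  have hWne : ((a : ℝ) ^ n * n) ≠ 0 := by positivity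
  push_cast
  rw [sub_div, div_self hWne]
  congr 1
  rw [Finset.sum_div]
  have hstep : ∀ i : Fin n, (F : ℝ) ^ Nat.gcd n i.val *
      (a : ℝ) ^ (n - Nat.gcd n i.val) / ((a : ℝ) ^ n * n) =
        (1 / (n : ℝ)) * ((F : ℝ) / (a : ℝ)) ^ Nat.gcd n i.val := by
    intro i
    rw [div_mul_eq_div_div, pow_div_helper _ _ haR (Nat.gcd_le_left i.val hn0)]
    rw [div_eq_mul_one_div, mul_comm]
  rw [Finset.sum_congr rfl (fun i _ => hstep i), ← Finset.mul_sum]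
  congr 1
  have := Fin.sum_univ_eq_sum_range (fun j => ((F : ℝ) / (a : ℝ)) ^ Nat.gcd n j) n
  rw [this, sum_pow_gcd n hn]

end Final
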